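/- Orthogonality of grammar derivations and global index derivations: let a, b : α → α → Prop satisfy the one-step commutation property ∀ x y z, a x y → b y z → ∃ w, b x w ∧ a w z. Then for all x, y: Relation.ReflTransGen (fun u v => a u v ∨ b u v) x y holds if and only if there exists z with Relation.ReflTransGen b x z and Relation.ReflTransGen a z y. (Theorem 5 of the paper: H (⇒_G ∪ ⇒_C)* K if and only if H (⇒_C* ; ⇒_G*) K.) -/

import Mathlib

theorem comm_star {α : Type*} {a b : α → α → Prop}
    (hcomm : ∀ x y z, a x y → b y z → ∃ w, b x w ∧ a w z)
    {x y z : α} (h : Relation.ReflTransGen a x y) (hb : b y z) :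
    ∃ w, b x w ∧ Relation.ReflTransGen a w z := by
  induction h generalizing z with
  | refl => exact ⟨z, hb, .refl⟩
  | tail _ hstep ih =>
    obtain ⟨w', hbw', haw'⟩ := hcomm _ _ _ hstep hb
    obtain ⟨w, hbw, haw⟩ := ih hbw'
    exact ⟨w, hbw, haw.tail haw'⟩

/-- Theorem 5: orthogonality of grammar derivations and global index derivations. -/
theorem union_derive_iff_seq {α : Type*} (a b : α → α → Prop)
    (hcomm : ∀ x y z, a x y → b y z → ∃ w, b x w ∧ a w z)
    (x y : α) :
    Relation.ReflTransGen (fun u v => a u v ∨ b u v) x y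
      ↔ ∃ z, Relation.ReflTransGen b x z ∧ Relation.ReflTransGen a z y := by
  constructor
  · intro h
    induction h with
    | refl => exact ⟨x, .refl, .refl⟩
    | tail _ hstep ih =>
      obtain ⟨z, hbz, haz⟩ := ih
      cases hstep with
      | inl ha => exact ⟨z, hbz, haz.tail ha⟩
      | inr hb =>
        obtain ⟨w, hbw, haw⟩ := comm_star hcomm haz hb
        exact ⟨w, hbz.tail hbw, haw⟩
  · rintro ⟨z, hbz, haz⟩
    exact Relation.ReflTransGen.trans (Relation.ReflTransGen.mono (fun _ _ h => Or.inr h) _ _ hbz) (Relation.ReflTransGen.mono (fun _ _ h => Or.inl h) _ _ haz)
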